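/- Let A, X, D ∈ ℂ^{n×n} and B ∈ ℂ^{n×m} with X Hermitian and D Hermitian positive semidefinite, and suppose A X + X A* + D + B B* = 0. If v ∈ ℂⁿ satisfies A* v = iσ v for some real number σ, then v* D v = 0 and B* v = 0. -/

import Mathlib

open Matrix ComplexOrder

/-- If `X` is Hermitian, `D` is Hermitian positive semidefinite and
`A X + X A* + D + B B* = 0`, then any eigenvector `v` of `A*` to a purely
imaginary eigenvalue `iσ` satisfies `v* D v = 0` and `B* v = 0`. -/
theorem lyapunov_imaginary_eigenvector {n m : ℕ}
    (A X D : Matrix (Fin n) (Fin n) ℂ) (B : Matrix (Fin n) (Fin m) ℂ)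
    (hX : X.IsHermitian) (hD : D.PosSemidef)
    (h : A * X + X * Aᴴ + D + B * Bᴴ = 0)
    (v : Fin n → ℂ) (σ : ℝ) (hv : Aᴴ *ᵥ v = (Complex.I * σ) • v) :
    star v ⬝ᵥ (D *ᵥ v) = 0 ∧ Bᴴ *ᵥ v = 0 := by
  have hsum : star v ⬝ᵥ ((A * X + X * Aᴴ + D + B * Bᴴ) *ᵥ v) = 0 := by
    rw [h]; simp
  have h1 : star v ⬝ᵥ ((A * X) *ᵥ v) = (-(Complex.I * σ)) * (star v ⬝ᵥ (X *ᵥ v)) := by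
    rw [← mulVec_mulVec, dotProduct_mulVec]
    have : star v ᵥ* A = star (Aᴴ *ᵥ v) := by
      rw [star_mulVec, conjTranspose_conjTranspose]
    rw [this, hv, star_smul, smul_dotProduct]
    simp [mul_comm]
  have h2 : star v ⬝ᵥ ((X * Aᴴ) *ᵥ v) = (Complex.I * σ) * (star v ⬝ᵥ (X *ᵥ v)) := by
    rw [← mulVec_mulVec, hv, mulVec_smul, dotProduct_smul]
    simp
  have h3 : star v ⬝ᵥ ((B * Bᴴ) *ᵥ v) = star (Bᴴ *ᵥ v) ⬝ᵥ (Bᴴ *ᵥ v) := by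
    rw [← mulVec_mulVec, dotProduct_mulVec, star_mulVec, conjTranspose_conjTranspose]
  have hD0 : (0 : ℂ) ≤ star v ⬝ᵥ (D *ᵥ v) := hD.dotProduct_mulVec_nonneg v
  have hB0 : (0 : ℂ) ≤ star v ⬝ᵥ ((B * Bᴴ) *ᵥ v) :=
    (Matrix.posSemidef_self_mul_conjTranspose B).dotProduct_mulVec_nonneg v
  have key : star v ⬝ᵥ (D *ᵥ v) + star v ⬝ᵥ ((B * Bᴴ) *ᵥ v) = 0 := by
    have := hsum
    simp only [add_mulVec, dotProduct_add] at this
    rw [h1, h2] at this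
    ring_nf at this ⊢
    linear_combination this
  have hDz : star v ⬝ᵥ (D *ᵥ v) = 0 := by
    have := add_eq_zero_iff_of_nonneg hD0 hB0 |>.mp key
    exact this.1
  refine ⟨hDz, ?_⟩
  have hBz : star (Bᴴ *ᵥ v) ⬝ᵥ (Bᴴ *ᵥ v) = 0 := by
    rw [← h3]
    exact ((add_eq_zero_iff_of_nonneg hD0 hB0).mp key).2
  exact (dotProduct_star_self_eq_zero).mp hBz
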